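/- arXiv:2012.12815 — 2 statements merged into one kernel-verified Lean document; each statement's English description precedes it below -/
import Mathlib

section
/- A real (p,p)-form u on a complex n-dimensional vector space V is Hermitian positive if and only if the map (β,η) ↦ (coefficient of u ∧ i^{q²} β ∧ η̄ with respect to the standard positive volume form), for β,η ∈ Λ^{q,0}V^∨ with q = n−p, defines a positive semidefinite Hermitian sesquilinear form on Λ^{q,0}V^∨. -/
open Complex BigOperators

noncomputable section

/-- The space of ℂ-valued real-alternating `k`-forms on a complex vector space `V`.
(`(p,q)`-forms with `p + q = k` form distinguished subspaces of this space.) -/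
abbrev AltForm (V : Type*) [AddCommGroup V] [Module ℂ V] (k : ℕ) : Type _ :=
  AlternatingMap ℝ V ℂ (Fin k)

namespace AltForm

variable {V : Type*} [AddCommGroup V] [Module ℂ V]

/-- The wedge product of two forms. -/
def wedge {p q : ℕ} (u : AltForm V p) (v : AltForm V q) : AltForm V (p + q) :=
  ((TensorProduct.lift (LinearMap.mul ℝ ℂ)).compAlternatingMap
    (u.domCoprod v)).domDomCongr finSumFinEquiv

/-- The conjugate of a form. -/
def conj {k : ℕ} (u : AltForm V k) : AltForm V k :=
  Complex.conjAe.toLinearMap.compAlternatingMap u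

/-- Reindexing a form along an equality of degrees. -/
def castForm {k l : ℕ} (h : k = l) (u : AltForm V k) : AltForm V l :=
  u.domDomCongr (finCongr h)

/-- Restriction of scalars of a ℂ-alternating map to an ℝ-alternating map. -/
def ofComplexAlt {p : ℕ} (u : AlternatingMap ℂ V ℂ (Fin p)) : AltForm V p :=
  { toMultilinearMap := u.toMultilinearMap.restrictScalars ℝ,
    map_eq_zero_of_eq' := u.map_eq_zero_of_eq' }

/-- The wedge product `f 0 ∧ f 1 ∧ ⋯ ∧ f (p-1)` of a family of ℂ-linear forms,
given by the determinant formula. -/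
def wedgeFamily {p : ℕ} (f : Fin p → (V →ₗ[ℂ] ℂ)) : AltForm V p :=
  ofComplexAlt (Matrix.detRowAlternating.compLinearMap (LinearMap.pi f))

/-- A `(p,0)`-form is decomposable if it is a wedge product of `p` elements of `Λ^{1,0}V^∨`,
i.e. of ℂ-linear functionals. -/
def IsDecomposable {p : ℕ} (β : AltForm V p) : Prop :=
  ∃ f : Fin p → (V →ₗ[ℂ] ℂ), β = wedgeFamily f

/-- `u` is of type `(p,q)`: pulling back by scalar multiplication by `c` acts by
`c ^ p * c̄ ^ q`.  Among real-alternating `(p+q)`-forms this characterizes the forms in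
`Λ^{p,q} V^∨`. -/
def IsTypeForm (p q : ℕ) (u : AltForm V (p + q)) : Prop :=
  ∀ (c : ℂ) (v : Fin (p + q) → V),
    u (fun i => c • v i) = c ^ p * (starRingEnd ℂ) c ^ q * u v

/-- The standard positive volume form
`i^{n²} (e₁^∨∧⋯∧eₙ^∨) ∧ (ē₁^∨∧⋯∧ēₙ^∨) = i e₁^∨∧ē₁^∨ ∧ ⋯ ∧ i eₙ^∨∧ēₙ^∨`
associated with a basis. -/
def stdVol {n : ℕ} (b : Module.Basis (Fin n) ℂ V) : AltForm V (n + n) :=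
  (Complex.I ^ (n ^ 2)) •
    wedge (wedgeFamily fun i => b.coord i) (conj (wedgeFamily fun i => b.coord i))

/-- A `(n,n)`-form is a positive volume form if it is a nonnegative real multiple of the
standard volume form of a basis. -/
def IsPosVolume {n : ℕ} (b : Module.Basis (Fin n) ℂ V) (ν : AltForm V (n + n)) : Prop :=
  ∃ τ : ℝ, 0 ≤ τ ∧ ν = τ • stdVol b

/-- A complex number is a nonnegative real. -/
def IsNonnegReal (z : ℂ) : Prop := 0 ≤ z.re ∧ z.im = 0

/-- `u` is real, i.e. `ū = u`. -/
def IsRealForm {k : ℕ} (u : AltForm V k) : Prop := conj u = u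

/-- Auxiliary vector list for the mixed evaluation `u(w₁,…,w_p,w̄₁,…,w̄_p)`. -/
def mixedVec {p : ℕ} (w : Fin p → V) (j : Fin (p + p)) : V :=
  if h : (j : ℕ) < p then w ⟨j, h⟩ else w ⟨(j : ℕ) - p, by have := j.isLt; omega⟩

/-- Auxiliary coefficients for the mixed evaluation. -/
def mixedCoeff (p : ℕ) (j : Fin (p + p)) : Bool → ℂ
  | true => if (j : ℕ) < p then -Complex.I else Complex.I
  | false => 1

/-- The evaluation `u(w₁,…,w_p,w̄₁,…,w̄_p)` of a `(p+p)`-form `u` on the `(1,0)`-parts of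
`w₁,…,w_p` followed by the `(0,1)`-parts of `w₁,…,w_p`, expressed through the real
multilinear expansion `w^{1,0} = (w - i·(i•w))/2`, `w^{0,1} = (w + i·(i•w))/2`. -/
def mixedEval {p : ℕ} (u : AltForm V (p + p)) (w : Fin p → V) : ℂ :=
  (4 ^ p : ℂ)⁻¹ * ∑ S : Fin (p + p) → Bool,
    (∏ j : Fin (p + p), mixedCoeff p j (S j)) *
      u (fun j => if S j then Complex.I • mixedVec w j else mixedVec w j)

/-- `u` is a positive `(p,p)`-form: tested against decomposable `(q,0)`-forms `β`
(`q = n - p`), the form `u ∧ i^{q²} β ∧ β̄` is a positive volume form. -/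
def IsPosForm {n p : ℕ} (b : Module.Basis (Fin n) ℂ V) (hp : p ≤ n) (u : AltForm V (p + p)) : Prop :=
  ∀ β : AltForm V (n - p), IsDecomposable β →
    IsPosVolume b (castForm (by omega)
      (wedge u ((Complex.I ^ ((n - p) ^ 2)) • wedge β (conj β))))

/-- `u` is a Hermitian positive `(p,p)`-form: tested against arbitrary `(q,0)`-forms `β`
(`q = n - p`), the form `u ∧ i^{q²} β ∧ β̄` is a positive volume form. -/
def IsHermPosForm {n p : ℕ} (b : Module.Basis (Fin n) ℂ V) (hp : p ≤ n) (u : AltForm V (p + p)) : Prop :=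
  ∀ β : AltForm V (n - p), IsTypeForm (n - p) 0 β →
    IsPosVolume b (castForm (by omega)
      (wedge u ((Complex.I ^ ((n - p) ^ 2)) • wedge β (conj β))))

/-- `u` is a strongly positive `(p,p)`-form: a finite sum `∑ i^{p²} α_s ∧ ᾱ_s` with each
`α_s` a decomposable `(p,0)`-form. -/
def IsStronglyPos {p : ℕ} (u : AltForm V (p + p)) : Prop :=
  ∃ (N : ℕ) (α : Fin N → AltForm V p), (∀ s, IsDecomposable (α s)) ∧
    u = ∑ s, (Complex.I ^ (p ^ 2)) • wedge (α s) (conj (α s))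

/-- The Hermitian form `τ ↦ (-i)·θ(τ, τ̄)` associated with a `(1,1)`-form `θ`; in terms of the
underlying real alternating form it is `τ ↦ θ(τ, i•τ)/2`. -/
def HForm (θ : AltForm V 2) (τ : V) : ℂ :=
  -Complex.I * ((Complex.I / 2) * θ ![τ, Complex.I • τ])

/-- Griffiths semipositivity of a matrix `Θ` of `(1,1)`-forms:
`∑ v_α v̄_β (-i)Θ_{αβ}(τ,τ̄) ≥ 0` for all `v ∈ ℂ^r` and `τ ∈ V`. -/
def GriffithsSemipos {r : ℕ} (Θ : Fin r → Fin r → AltForm V 2) : Prop :=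
  ∀ (v : Fin r → ℂ) (τ : V),
    IsNonnegReal (∑ α, ∑ β, v α * (starRingEnd ℂ) (v β) * HForm (Θ α β) τ)

/-- The list of arguments `e₁, i•e₁, …, eₙ, i•eₙ` built from a basis. -/
def stdArgs {n : ℕ} (b : Module.Basis (Fin n) ℂ V) : Fin (n + n) → V :=
  fun j =>
    if (j : ℕ) % 2 = 0 then b ⟨(j : ℕ) / 2, by have := j.isLt; omega⟩
    else Complex.I • b ⟨(j : ℕ) / 2, by have := j.isLt; omega⟩

end AltForm

open AltForm

/-- The coefficient (up to the fixed positive factor `stdVol b (stdArgs b) > 0`) of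
`u ∧ i^{q²} β ∧ η̄` with respect to the standard positive volume form, computed by
evaluation at the standard arguments `e₁, i•e₁, …, eₙ, i•eₙ`. -/
def hermCoeff {V : Type*} [AddCommGroup V] [Module ℂ V] {n p : ℕ} (hp : p ≤ n)
    (b : Module.Basis (Fin n) ℂ V) (u : AltForm V (p + p)) (β η : AltForm V (n - p)) : ℂ :=
  (castForm (by omega)
    (wedge u ((Complex.I ^ ((n - p) ^ 2)) • wedge β (AltForm.conj η)))) (stdArgs b)


namespace HPaux

open AltForm AlternatingMap

variable {V : Type*} [AddCommGroup V] [Module ℂ V]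

lemma conj_apply {k : ℕ} (u : AltForm V k) (v : Fin k → V) :
    AltForm.conj u v = (starRingEnd ℂ) (u v) := rfl

lemma castForm_apply {k l : ℕ} (h : k = l) (u : AltForm V k) (v : Fin l → V) :
    castForm h u v = u (fun i => v (finCongr h i)) := rfl

lemma conj_conj {k : ℕ} (u : AltForm V k) : AltForm.conj (AltForm.conj u) = u := by
  ext v
  simp [conj_apply]

lemma conj_add {k : ℕ} (u v : AltForm V k) :
    AltForm.conj (u + v) = AltForm.conj u + AltForm.conj v := by
  ext x
  simp [conj_apply]

lemma conj_smul {k : ℕ} (c : ℂ) (u : AltForm V k) :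
    AltForm.conj (c • u) = (starRingEnd ℂ) c • AltForm.conj u := by
  ext x
  simp [conj_apply]

lemma comp_wedge {k l : ℕ} (L φ ψ : ℂ →ₗ[ℝ] ℂ)
    (h : ∀ x y : ℂ, L (x * y) = φ x * ψ y)
    (u : AltForm V k) (v : AltForm V l) :
    L.compAlternatingMap (wedge u v) =
      wedge (φ.compAlternatingMap u) (ψ.compAlternatingMap v) := by
  ext x
  simp only [wedge, LinearMap.compAlternatingMap_apply, AlternatingMap.domDomCongr_apply,
    AlternatingMap.domCoprod_apply, MultilinearMap.sum_apply, map_sum]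
  refine Finset.sum_congr rfl fun σ _ => ?_
  induction σ using Quotient.inductionOn' with
  | h σ =>
    simp only [domCoprod.summand_mk'', MultilinearMap.smul_apply,
      MultilinearMap.domDomCongr_apply, MultilinearMap.domCoprod_apply,
      AlternatingMap.coe_multilinearMap, Units.smul_def, map_zsmul, LinearMap.compAlternatingMap_apply,
      TensorProduct.lift.tmul, LinearMap.mul_apply', h]
    erw [_root_.smul_apply, _root_.smul_apply]
    simp only [domCoprod.summand_mk'', MultilinearMap.smul_apply,
      MultilinearMap.domDomCongr_apply, MultilinearMap.domCoprod_apply,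
      AlternatingMap.coe_multilinearMap, Units.smul_def, map_zsmul, LinearMap.compAlternatingMap_apply,
      TensorProduct.lift.tmul, LinearMap.mul_apply', h]

end HPaux
namespace HPaux2
open AltForm AlternatingMap HPaux

variable {V : Type*} [AddCommGroup V] [Module ℂ V]

lemma smul_eq_comp {k : ℕ} (c : ℂ) (u : AltForm V k) :
    c • u = (LinearMap.mulLeft ℝ c).compAlternatingMap u := by
  ext v
  simp [smul_eq_mul]

lemma id_comp {k : ℕ} (u : AltForm V k) :
    (LinearMap.id : ℂ →ₗ[ℝ] ℂ).compAlternatingMap u = u := by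
  ext v; rfl

lemma conj_wedge {k l : ℕ} (u : AltForm V k) (v : AltForm V l) :
    AltForm.conj (wedge u v) = wedge (AltForm.conj u) (AltForm.conj v) :=
  comp_wedge _ _ _ (fun x y => by simp) u v

lemma wedge_smul_right {k l : ℕ} (c : ℂ) (u : AltForm V k) (v : AltForm V l) :
    wedge u (c • v) = c • wedge u v := by
  rw [smul_eq_comp c v, smul_eq_comp c (wedge u v),
    comp_wedge (LinearMap.mulLeft ℝ c) LinearMap.id (LinearMap.mulLeft ℝ c)
      (fun x y => by simp [LinearMap.mulLeft_apply]; ring) u v, id_comp]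

lemma wedge_smul_left {k l : ℕ} (c : ℂ) (u : AltForm V k) (v : AltForm V l) :
    wedge (c • u) v = c • wedge u v := by
  rw [smul_eq_comp c u, smul_eq_comp c (wedge u v),
    comp_wedge (LinearMap.mulLeft ℝ c) (LinearMap.mulLeft ℝ c) LinearMap.id
      (fun x y => by simp [LinearMap.mulLeft_apply]; ring) u v, id_comp]

lemma domCoprod_add_right {k l : ℕ} (u : AltForm V k) (v w : AltForm V l) :
    AlternatingMap.domCoprod (R' := ℝ) u (v + w) =
      AlternatingMap.domCoprod u v + AlternatingMap.domCoprod u w := by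
  rw [← AlternatingMap.domCoprod'_apply, ← AlternatingMap.domCoprod'_apply,
    ← AlternatingMap.domCoprod'_apply, TensorProduct.tmul_add, map_add]

lemma domCoprod_add_left {k l : ℕ} (u v : AltForm V k) (w : AltForm V l) :
    AlternatingMap.domCoprod (R' := ℝ) (u + v) w =
      AlternatingMap.domCoprod u w + AlternatingMap.domCoprod v w := by
  rw [← AlternatingMap.domCoprod'_apply, ← AlternatingMap.domCoprod'_apply,
    ← AlternatingMap.domCoprod'_apply, TensorProduct.add_tmul, map_add]

lemma wedge_add_right {k l : ℕ} (u : AltForm V k) (v w : AltForm V l) :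
    wedge u (v + w) = wedge u v + wedge u w := by
  unfold AltForm.wedge
  rw [domCoprod_add_right]
  ext x
  simp

lemma wedge_add_left {k l : ℕ} (u v : AltForm V k) (w : AltForm V l) :
    wedge (u + v) w = wedge u w + wedge v w := by
  unfold AltForm.wedge
  rw [domCoprod_add_left]
  ext x
  simp

end HPaux2
namespace HPaux3
open AltForm AlternatingMap HPaux Equiv

variable {V : Type*} [AddCommGroup V] [Module ℂ V]

/-- The multilinear "product of functionals" map. -/
def mprod {m : ℕ} (ℓ : Fin m → (V →ₗ[ℝ] ℂ)) : MultilinearMap ℝ (fun _ : Fin m => V) ℂ :=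
  (MultilinearMap.mkPiAlgebra ℝ (Fin m) ℂ).compLinearMap ℓ

lemma mprod_apply {m : ℕ} (ℓ : Fin m → (V →ₗ[ℝ] ℂ)) (v : Fin m → V) :
    mprod ℓ v = ∏ j, ℓ j (v j) := by
  simp [mprod]

lemma wedgeFamily_eq_alternatization {m : ℕ} (f : Fin m → (V →ₗ[ℂ] ℂ)) :
    wedgeFamily f =
      MultilinearMap.alternatization (mprod fun j => (f j).restrictScalars ℝ) := by
  ext v
  rw [MultilinearMap.alternatization_apply]
  show Matrix.detRowAlternating (fun i => LinearMap.pi f (v i)) = _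
  rw [Matrix.detRowAlternating, MultilinearMap.alternatization_apply]
  refine Finset.sum_congr rfl fun σ _ => ?_
  congr 1

lemma conj_alternatization {m : ℕ} (w : MultilinearMap ℝ (fun _ : Fin m => V) ℂ) :
    Complex.conjAe.toLinearMap.compAlternatingMap (MultilinearMap.alternatization w) =
      MultilinearMap.alternatization
        (Complex.conjAe.toLinearMap.compMultilinearMap w) := by
  ext v
  simp only [LinearMap.compAlternatingMap_apply, MultilinearMap.alternatization_apply,
    map_sum, Units.smul_def, map_zsmul, LinearMap.compMultilinearMap_apply,
    MultilinearMap.domDomCongr_apply]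

lemma conj_mprod {m : ℕ} (ℓ : Fin m → (V →ₗ[ℝ] ℂ)) :
    Complex.conjAe.toLinearMap.compMultilinearMap (mprod ℓ) =
      mprod (fun j => Complex.conjAe.toLinearMap ∘ₗ ℓ j) := by
  ext v
  simp [mprod_apply, map_prod]

lemma conj_wedgeFamily {m : ℕ} (g : Fin m → (V →ₗ[ℂ] ℂ)) :
    AltForm.conj (wedgeFamily g) =
      MultilinearMap.alternatization
        (mprod fun j => Complex.conjAe.toLinearMap ∘ₗ (g j).restrictScalars ℝ) := by
  rw [show AltForm.conj (V := V) (wedgeFamily g)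
      = Complex.conjAe.toLinearMap.compAlternatingMap (wedgeFamily g) from rfl,
    wedgeFamily_eq_alternatization, conj_alternatization, conj_mprod]

lemma comp_alternatization {ι : Type*} [Fintype ι] [DecidableEq ι]
    {N N₂ : Type*} [AddCommGroup N] [Module ℝ N]
    [AddCommGroup N₂] [Module ℝ N₂] (L : N →ₗ[ℝ] N₂)
    (w : MultilinearMap ℝ (fun _ : ι => V) N) :
    L.compAlternatingMap (MultilinearMap.alternatization w) =
      MultilinearMap.alternatization (L.compMultilinearMap w) := by
  ext v
  simp only [LinearMap.compAlternatingMap_apply, MultilinearMap.alternatization_apply,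
    map_sum, Units.smul_def, map_zsmul, LinearMap.compMultilinearMap_apply,
    MultilinearMap.domDomCongr_apply]

lemma domDomCongr_alternatization {k l : ℕ} (e : Fin k ⊕ Fin l ≃ Fin (k + l))
    (w : MultilinearMap ℝ (fun _ : Fin k ⊕ Fin l => V) ℂ) :
    AlternatingMap.domDomCongr e (MultilinearMap.alternatization w) =
      MultilinearMap.alternatization (MultilinearMap.domDomCongr e w) := by
  ext v
  rw [AlternatingMap.domDomCongr_apply, MultilinearMap.alternatization_apply,
    MultilinearMap.alternatization_apply]
  refine Fintype.sum_equiv (e.permCongr) _ _ fun σ => ?_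
  rw [Equiv.Perm.sign_permCongr]
  congr 1
  simp only [MultilinearMap.domDomCongr_apply]
  congr 1
  funext i
  simp [Equiv.permCongr_apply]

/-- The combined family of functionals. -/
def lmix {m : ℕ} (f g : Fin m → (V →ₗ[ℂ] ℂ)) : Fin (m + m) → (V →ₗ[ℝ] ℂ) :=
  fun j => Sum.elim (fun i => ((f i).restrictScalars ℝ))
    (fun i => Complex.conjAe.toLinearMap ∘ₗ ((g i).restrictScalars ℝ))
    (finSumFinEquiv.symm j)

lemma key_eval {m : ℕ} (f g : Fin m → (V →ₗ[ℂ] ℂ)) :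
    wedge (wedgeFamily f) (AltForm.conj (wedgeFamily g)) =
      MultilinearMap.alternatization (mprod (lmix f g)) := by
  rw [wedgeFamily_eq_alternatization f, conj_wedgeFamily g]
  unfold AltForm.wedge
  rw [← MultilinearMap.domCoprod_alternization, comp_alternatization,
    domDomCongr_alternatization]
  congr 1
  ext v
  rw [MultilinearMap.domDomCongr_apply, LinearMap.compMultilinearMap_apply,
    MultilinearMap.domCoprod_apply, mprod_apply]
  simp only [TensorProduct.lift.tmul, LinearMap.mul_apply', mprod_apply]
  rw [show (∏ j, lmix f g j (v j)) = ∏ s : Fin m ⊕ Fin m,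
      (lmix f g (finSumFinEquiv s)) (v (finSumFinEquiv s)) from
    (Fintype.prod_equiv finSumFinEquiv _ _ fun s => rfl).symm, Fintype.prod_sum_type]
  congr 1 <;> refine Finset.prod_congr rfl fun j _ => ?_ <;>
    simp only [lmix, Fin.addNat, Fin.castAdd, Fin.natAdd] <;>
    rw [show finSumFinEquiv.symm _ = _ from finSumFinEquiv.symm_apply_apply _] <;> simp

lemma key_eval_det {m : ℕ} (f g : Fin m → (V →ₗ[ℂ] ℂ)) (v : Fin (m + m) → V) :
    wedge (wedgeFamily f) (AltForm.conj (wedgeFamily g)) v =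
      Matrix.det (Matrix.of fun x y => lmix f g y (v x)) := by
  rw [key_eval, MultilinearMap.alternatization_apply, Matrix.det_apply]
  refine Finset.sum_congr rfl fun σ _ => ?_
  rw [MultilinearMap.domDomCongr_apply, mprod_apply]
  rfl

end HPaux3
namespace HPaux4
open Equiv Equiv.Perm

/-- The "uninterleaving" permutation `2k ↦ k`, `2k+1 ↦ n+k`. -/
def uninter (n : ℕ) : Equiv.Perm (Fin (n + n)) where
  toFun j := if (j : ℕ) % 2 = 0 then ⟨(j : ℕ) / 2, by omega⟩
    else ⟨n + (j : ℕ) / 2, by have := j.isLt; omega⟩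
  invFun j := if h : (j : ℕ) < n then ⟨2 * (j : ℕ), by omega⟩
    else ⟨2 * ((j : ℕ) - n) + 1, by have := j.isLt; omega⟩
  left_inv j := by
    have hj := j.isLt
    apply Fin.ext
    simp only [apply_ite Fin.val, apply_dite Fin.val]
    split_ifs <;> simp_all <;> omega
  right_inv j := by
    have hj := j.isLt
    apply Fin.ext
    simp only [apply_ite Fin.val, apply_dite Fin.val]
    split_ifs <;> simp_all <;> omega

lemma uninter_apply_val (n : ℕ) (j : Fin (n + n)) :
    ((uninter n j : Fin (n + n)) : ℕ) =
      if (j : ℕ) % 2 = 0 then (j : ℕ) / 2 else n + (j : ℕ) / 2 := by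
  by_cases h : (j : ℕ) % 2 = 0 <;> simp [uninter, h]

/-- Embedding of `Fin (n+n)` as the first part of `Fin ((n+1)+(n+1))`. -/
def emb1 (n : ℕ) : Fin (n + n) ≃ {x : Fin ((n + 1) + (n + 1)) // (x : ℕ) < n + n} where
  toFun k := ⟨⟨(k : ℕ), by omega⟩, by simpa using k.isLt⟩
  invFun x := ⟨(x.1 : ℕ), x.2⟩
  left_inv k := rfl
  right_inv x := rfl

/-- Embedding of `Fin (n+1)` as the middle part `[n, 2n]` of `Fin ((n+1)+(n+1))`. -/
def emb2 (n : ℕ) : Fin (n + 1) ≃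
    {x : Fin ((n + 1) + (n + 1)) // n ≤ (x : ℕ) ∧ (x : ℕ) ≤ n + n} where
  toFun k := ⟨⟨n + (k : ℕ), by have := k.isLt; omega⟩, by constructor <;> simp <;> omega⟩
  invFun x := ⟨(x.1 : ℕ) - n, by have := x.2; omega⟩
  left_inv k := by apply Fin.ext; simp
  right_inv x := by
    apply Subtype.ext; apply Fin.ext; have := x.2; simp; omega

lemma emb2_val (n : ℕ) (k : Fin (n + 1)) :
    ((((emb2 n) k) : Fin ((n + 1) + (n + 1))) : ℕ) = n + (k : ℕ) := rfl

set_option maxHeartbeats 1000000 in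
lemma uninter_succ (n : ℕ) :
    uninter (n + 1) =
      ((finRotate (n + 1)).extendDomain (emb2 n)) *
        ((uninter n).extendDomain (emb1 n)) := by
  ext j
  have hjlt := j.isLt
  rw [Perm.mul_apply]
  rcases lt_trichotomy (j : ℕ) (n + n) with h | h | h
  · -- j in the image of emb1
    rw [Perm.extendDomain_apply_subtype (uninter n) (emb1 n) (b := j) h]
    set y : Fin ((n + 1) + (n + 1)) :=
      (↑((emb1 n) ((uninter n) ((emb1 n).symm ⟨j, h⟩))) : Fin ((n + 1) + (n + 1))) with hy
    have hyval : (y : ℕ) = if (j : ℕ) % 2 = 0 then (j : ℕ) / 2 else n + (j : ℕ) / 2 := by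
      rw [hy]
      show (((uninter n) ((emb1 n).symm ⟨j, h⟩) : Fin (n + n)) : ℕ) = _
      rw [uninter_apply_val]
      rfl
    by_cases hpar : (j : ℕ) % 2 = 0
    · have hnot : ¬ (n ≤ (y : ℕ) ∧ (y : ℕ) ≤ n + n) := by
        rw [hyval, if_pos hpar]; rintro ⟨h1, -⟩; omega
      rw [Perm.extendDomain_apply_not_subtype (finRotate (n + 1)) (emb2 n) (b := y) hnot]
      show ((uninter (n + 1) j : Fin _) : ℕ) = (y : ℕ)
      rw [hyval, if_pos hpar, uninter_apply_val, if_pos hpar]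
    · have hin : n ≤ (y : ℕ) ∧ (y : ℕ) ≤ n + n := by rw [hyval, if_neg hpar]; omega
      rw [Perm.extendDomain_apply_subtype (finRotate (n + 1)) (emb2 n) (b := y) hin]
      have hsymm : ((emb2 n).symm ⟨y, hin⟩ : Fin (n + 1)) = ⟨(j : ℕ) / 2, by omega⟩ := by
        apply Fin.ext
        show (y : ℕ) - n = (j : ℕ) / 2
        rw [hyval, if_neg hpar]
        omega
      rw [hsymm, emb2_val]
      have hrot : ((finRotate (n + 1)) (⟨(j : ℕ) / 2, by omega⟩ : Fin (n + 1)) : ℕ)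
          = (j : ℕ) / 2 + 1 := by
        rw [coe_finRotate]
        have hne : (⟨(j : ℕ) / 2, by omega⟩ : Fin (n + 1)) ≠ Fin.last n := by
          refine Fin.ne_of_val_ne ?_
          rw [Fin.val_last]
          show (j : ℕ) / 2 ≠ n
          omega
        rw [if_neg hne]
      rw [hrot]
      show ((uninter (n + 1) j : Fin _) : ℕ) = _
      rw [uninter_apply_val, if_neg hpar]
      omega
  · -- j = 2n
    rw [Perm.extendDomain_apply_not_subtype (uninter n) (emb1 n) (b := j) (by omega)]
    have hin : n ≤ (j : ℕ) ∧ (j : ℕ) ≤ n + n := by omega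
    rw [Perm.extendDomain_apply_subtype (finRotate (n + 1)) (emb2 n) (b := j) hin]
    have hsymm : ((emb2 n).symm ⟨j, hin⟩ : Fin (n + 1)) = Fin.last n := by
      apply Fin.ext
      rw [Fin.val_last]
      show (j : ℕ) - n = n
      omega
    rw [hsymm, finRotate_last, emb2_val]
    show ((uninter (n + 1) j : Fin _) : ℕ) = _
    rw [uninter_apply_val, if_pos (by omega : (j : ℕ) % 2 = 0)]
    simp only [Fin.val_zero]
    omega
  · -- j = 2n+1
    have hj : (j : ℕ) = n + n + 1 := by omega
    rw [Perm.extendDomain_apply_not_subtype (uninter n) (emb1 n) (b := j) (by omega),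
      Perm.extendDomain_apply_not_subtype (finRotate (n + 1)) (emb2 n) (b := j)
        (by rintro ⟨-, h2⟩; omega)]
    show ((uninter (n + 1) j : Fin _) : ℕ) = (j : ℕ)
    rw [uninter_apply_val, if_neg (by omega : ¬ ((j : ℕ) % 2 = 0))]
    omega

lemma sign_uninter (n : ℕ) : Perm.sign (uninter n) = (-1) ^ (n * (n - 1) / 2) := by
  induction n with
  | zero =>
    rw [show uninter 0 = 1 from Equiv.ext fun j => absurd j.isLt (by omega)]
    simp
  | succ n ih =>
    rw [uninter_succ, map_mul, Perm.sign_extendDomain, Perm.sign_extendDomain,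
      sign_finRotate, ih, ← pow_add]
    congr 1
    have ha : 2 ∣ n * (n - 1) := by
      rcases n with _ | m
      · simp
      · rw [Nat.succ_sub_one, Nat.mul_comm]
        exact (Nat.even_mul_succ_self m).two_dvd
    have hb : (n + 1) * (n + 1 - 1) = n * (n - 1) + 2 * n := by
      rcases n with _ | m
      · simp
      · rw [Nat.succ_sub_one, Nat.succ_sub_one]
        ring
    rw [hb]
    omega

end HPaux4
namespace HPaux5
open AltForm Equiv Equiv.Perm HPaux3 HPaux4

variable {V : Type*} [AddCommGroup V] [Module ℂ V] {n : ℕ}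

lemma uninter_symm_apply_val (n : ℕ) (j : Fin (n + n)) :
    (((uninter n).symm j : Fin (n + n)) : ℕ) =
      if (j : ℕ) < n then 2 * (j : ℕ) else 2 * ((j : ℕ) - n) + 1 := by
  by_cases h : (j : ℕ) < n <;> simp [uninter, h]

lemma stdArgs_of_val_even (b : Module.Basis (Fin n) ℂ V) (x : Fin (n + n)) (k : Fin n)
    (h : (x : ℕ) = 2 * (k : ℕ)) : stdArgs b x = b k := by
  unfold AltForm.stdArgs
  rw [if_pos (by omega)]
  congr 1
  apply Fin.ext
  show (x : ℕ) / 2 = (k : ℕ)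
  omega

lemma stdArgs_of_val_odd (b : Module.Basis (Fin n) ℂ V) (x : Fin (n + n)) (k : Fin n)
    (h : (x : ℕ) = 2 * (k : ℕ) + 1) : stdArgs b x = Complex.I • b k := by
  unfold AltForm.stdArgs
  rw [if_neg (by omega)]
  congr 2
  apply Fin.ext
  show (x : ℕ) / 2 = (k : ℕ)
  omega

lemma coord_basis (b : Module.Basis (Fin n) ℂ V) (k l : Fin n) :
    b.coord l (b k) = if k = l then 1 else 0 := by
  simp [Module.Basis.coord_apply, Module.Basis.repr_self, Finsupp.single_apply]

lemma stdArgs_inl (b : Module.Basis (Fin n) ℂ V) (k : Fin n) :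
    stdArgs b ((uninter n).symm (finSumFinEquiv (Sum.inl k))) = b k := by
  apply stdArgs_of_val_even b _ k
  rw [uninter_symm_apply_val]
  have : ((finSumFinEquiv (Sum.inl k) : Fin (n + n)) : ℕ) = (k : ℕ) := by simp
  rw [this, if_pos k.isLt]

lemma stdArgs_inr (b : Module.Basis (Fin n) ℂ V) (k : Fin n) :
    stdArgs b ((uninter n).symm (finSumFinEquiv (Sum.inr k))) = Complex.I • b k := by
  apply stdArgs_of_val_odd b _ k
  rw [uninter_symm_apply_val]
  have : ((finSumFinEquiv (Sum.inr k) : Fin (n + n)) : ℕ) = n + (k : ℕ) := by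
    simp; omega
  rw [this, if_neg (by omega)]
  omega

lemma lmix_inl (f g : Fin n → (V →ₗ[ℂ] ℂ)) (l : Fin n) (x : V) :
    lmix f g (finSumFinEquiv (Sum.inl l)) x = f l x := by
  unfold HPaux3.lmix
  rw [Equiv.symm_apply_apply]
  simp

lemma lmix_inr (f g : Fin n → (V →ₗ[ℂ] ℂ)) (l : Fin n) (x : V) :
    lmix f g (finSumFinEquiv (Sum.inr l)) x = (starRingEnd ℂ) (g l x) := by
  unfold HPaux3.lmix
  rw [Equiv.symm_apply_apply]
  simp

lemma det_M (b : Module.Basis (Fin n) ℂ V) :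
    Matrix.det (Matrix.of fun x y =>
        lmix (fun i => b.coord i) (fun i => b.coord i) y (stdArgs b x)) =
      ((-1 : ℂ)) ^ (n * (n - 1) / 2) * (-(2 * Complex.I)) ^ n := by
  set M : Matrix (Fin (n + n)) (Fin (n + n)) ℂ := Matrix.of fun x y =>
    lmix (fun i => b.coord i) (fun i => b.coord i) y (stdArgs b x) with hM
  have h1 : (Matrix.det fun i => M ((uninter n).symm i)) =
      Perm.sign ((uninter n).symm) * M.det := Matrix.det_permute _ M
  have hsign : ((Perm.sign ((uninter n).symm) : ℤ) : ℂ) = (-1 : ℂ) ^ (n * (n - 1) / 2) := by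
    rw [Equiv.Perm.sign_symm, sign_uninter]
    push_cast
    rfl
  have hBlocks : (Matrix.of fun i j => M ((uninter n).symm i) j).submatrix
      finSumFinEquiv finSumFinEquiv =
      Matrix.fromBlocks 1 1 (Complex.I • 1) (-Complex.I • 1) := by
    ext s t
    rcases s with k | k <;> rcases t with l | l <;>
      simp only [Matrix.submatrix_apply, Matrix.of_apply, hM,
        Matrix.fromBlocks_apply₁₁, Matrix.fromBlocks_apply₁₂,
        Matrix.fromBlocks_apply₂₁, Matrix.fromBlocks_apply₂₂]
    · rw [stdArgs_inl, lmix_inl, coord_basis, Matrix.one_apply]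
    · rw [stdArgs_inl, lmix_inr, coord_basis]
      simp [Matrix.one_apply, apply_ite (starRingEnd ℂ)]
    · rw [stdArgs_inr, lmix_inl, map_smul, coord_basis]
      simp [Matrix.smul_apply, Matrix.one_apply, smul_eq_mul, mul_ite]
    · rw [stdArgs_inr, lmix_inr, map_smul, coord_basis]
      simp [Matrix.smul_apply, Matrix.one_apply, smul_eq_mul, mul_ite,
        apply_ite (starRingEnd ℂ)]
  have h2 : (Matrix.det fun i => M ((uninter n).symm i)) = (-(2 * Complex.I)) ^ n := by
    rw [show (Matrix.det fun i => M ((uninter n).symm i))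
        = Matrix.det (Matrix.of fun i j => M ((uninter n).symm i) j) from rfl]
    rw [← Matrix.det_submatrix_equiv_self finSumFinEquiv, hBlocks]
    haveI : Invertible (1 : Matrix (Fin n) (Fin n) ℂ) := invertibleOne
    rw [Matrix.det_fromBlocks₁₁]
    simp only [Matrix.det_one, invOf_one, Matrix.mul_one, one_mul]
    have : (-Complex.I • 1 - Complex.I • 1 : Matrix (Fin n) (Fin n) ℂ)
        = (-(2 * Complex.I)) • 1 := by
      rw [← sub_smul]
      congr 1
      ring
    rw [this, Matrix.det_smul, Matrix.det_one, Fintype.card_fin, mul_one]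
  -- combine
  have hs2 : ((-1 : ℂ)) ^ (n * (n - 1) / 2) * ((-1 : ℂ)) ^ (n * (n - 1) / 2) = 1 := by
    rw [← pow_add]
    exact Even.neg_one_pow ⟨n * (n - 1) / 2, rfl⟩
  have hcomb : (-1 : ℂ) ^ (n * (n - 1) / 2) * M.det = (-(2 * Complex.I)) ^ n := by
    rw [← hsign]
    exact h1.symm.trans h2
  calc M.det = ((-1 : ℂ) ^ (n * (n - 1) / 2) * (-1 : ℂ) ^ (n * (n - 1) / 2)) * M.det := by
        rw [hs2, one_mul]
    _ = (-1 : ℂ) ^ (n * (n - 1) / 2) * ((-1 : ℂ) ^ (n * (n - 1) / 2) * M.det) := by ring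
    _ = (-1 : ℂ) ^ (n * (n - 1) / 2) * (-(2 * Complex.I)) ^ n := by rw [hcomb]

lemma stdVol_stdArgs (b : Module.Basis (Fin n) ℂ V) :
    stdVol b (stdArgs b) = (2 : ℂ) ^ n := by
  unfold AltForm.stdVol
  rw [AlternatingMap.smul_apply, smul_eq_mul, key_eval_det, det_M]
  have hd : 2 ∣ n * (n - 1) := by
    rcases n with _ | m
    · simp
    · rw [Nat.succ_sub_one, Nat.mul_comm]
      exact (Nat.even_mul_succ_self m).two_dvd
  have hm : 2 * (n * (n - 1) / 2) = n * (n - 1) := Nat.mul_div_cancel' hd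
  have h1 : (-1 : ℂ) ^ (n * (n - 1) / 2) = Complex.I ^ (n * (n - 1)) := by
    conv_rhs => rw [← hm]
    rw [pow_mul, Complex.I_sq]
  have h2 : (-(2 * Complex.I)) ^ n = 2 ^ n * ((-1 : ℂ) ^ n * Complex.I ^ n) := by
    rw [neg_pow, mul_pow]; ring
  rw [h1, h2]
  have h3 : Complex.I ^ (n ^ 2) *
      (Complex.I ^ (n * (n - 1)) * (2 ^ n * ((-1 : ℂ) ^ n * Complex.I ^ n))) =
      2 ^ n * ((-1 : ℂ) ^ n * Complex.I ^ (n ^ 2 + (n * (n - 1) + n))) := by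
    rw [pow_add, pow_add]; ring
  rw [h3]
  have h4 : n ^ 2 + (n * (n - 1) + n) = 2 * (n * n) := by
    rcases n with _ | m
    · simp
    · rw [Nat.succ_sub_one]; ring
  rw [h4, pow_mul, Complex.I_sq]
  have h5 : (-1 : ℂ) ^ n * (-1 : ℂ) ^ (n * n) = 1 := by
    rw [← pow_add]
    refine Even.neg_one_pow ?_
    have : n + n * n = n * (n + 1) := by ring
    rw [this]
    exact Nat.even_mul_succ_self n
  calc (2 : ℂ) ^ n * ((-1 : ℂ) ^ n * (-1 : ℂ) ^ (n * n)) = 2 ^ n * 1 := by rw [h5]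
    _ = 2 ^ n := by ring

end HPaux5
namespace HPaux6
open AltForm

variable {V : Type*} [AddCommGroup V] [Module ℂ V] {n : ℕ}

def pairEquiv (n : ℕ) : Fin (n + n) ≃ Fin 2 × Fin n where
  toFun j := (⟨(j : ℕ) % 2, by omega⟩, ⟨(j : ℕ) / 2, by have := j.isLt; omega⟩)
  invFun x := ⟨2 * (x.2 : ℕ) + (x.1 : ℕ),
    by have h1 := x.1.isLt; have h2 := x.2.isLt; omega⟩
  left_inv j := by
    apply Fin.ext
    show 2 * ((j : ℕ) / 2) + (j : ℕ) % 2 = (j : ℕ)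
    omega
  right_inv x := by
    have h1 := x.1.isLt
    refine Prod.ext ?_ ?_ <;> apply Fin.ext
    · show (2 * (x.2 : ℕ) + (x.1 : ℕ)) % 2 = (x.1 : ℕ)
      omega
    · show (2 * (x.2 : ℕ) + (x.1 : ℕ)) / 2 = (x.2 : ℕ)
      omega

noncomputable def realBasis (b : Module.Basis (Fin n) ℂ V) : Module.Basis (Fin (n + n)) ℝ V :=
  (Complex.basisOneI.smulTower b).reindex (pairEquiv n).symm

lemma realBasis_eq_stdArgs (b : Module.Basis (Fin n) ℂ V) (j : Fin (n + n)) :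
    realBasis b j = stdArgs b j := by
  rw [realBasis, Module.Basis.reindex_apply, Equiv.symm_symm, Module.Basis.smulTower_apply]
  show Complex.basisOneI ⟨(j : ℕ) % 2, _⟩ • b ⟨(j : ℕ) / 2, _⟩ = stdArgs b j
  unfold AltForm.stdArgs
  by_cases h : (j : ℕ) % 2 = 0
  · rw [if_pos h]
    have h0 : (⟨(j : ℕ) % 2, by omega⟩ : Fin 2) = 0 := by
      apply Fin.ext; exact h
    rw [h0]
    rw [show Complex.basisOneI 0 = 1 from by simp [Complex.coe_basisOneI]]
    rw [one_smul]
  · rw [if_neg h]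
    have h0 : (⟨(j : ℕ) % 2, by omega⟩ : Fin 2) = 1 := by
      apply Fin.ext; show (j : ℕ) % 2 = 1; omega
    rw [h0]
    rw [show Complex.basisOneI 1 = Complex.I from by simp [Complex.coe_basisOneI]]

lemma top_eq (b : Module.Basis (Fin n) ℂ V) (f g : AltForm V (n + n))
    (h : f (stdArgs b) = g (stdArgs b)) : f = g := by
  refine Module.Basis.ext_alternating (realBasis b) fun v hv => ?_
  have hbij : Function.Bijective v := Finite.injective_iff_bijective.mp hv
  set σ : Equiv.Perm (Fin (n + n)) := Equiv.ofBijective v hbij with hσ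
  have hfe : (fun i => realBasis b (v i)) = (stdArgs b) ∘ σ := by
    funext i
    show realBasis b (v i) = stdArgs b (σ i)
    rw [realBasis_eq_stdArgs]
    congr 1
  rw [show (f fun i => realBasis b (v i)) = f ((stdArgs b) ∘ σ) from by rw [hfe],
    show (g fun i => realBasis b (v i)) = g ((stdArgs b) ∘ σ) from by rw [hfe],
    AlternatingMap.map_perm, AlternatingMap.map_perm, h]

end HPaux6
namespace HPaux7
open AltForm HPaux HPaux2

variable {V : Type*} [AddCommGroup V] [Module ℂ V] {n p : ℕ} (hp : p ≤ n)
  (b : Module.Basis (Fin n) ℂ V) (u : AltForm V (p + p))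

lemma castForm_add {k l : ℕ} (h : k = l) (f g : AltForm V k) :
    castForm h (f + g) = castForm h f + castForm h g := by
  ext v
  simp [castForm_apply]

lemma castForm_smul {k l : ℕ} (h : k = l) (c : ℂ) (f : AltForm V k) :
    castForm h (c • f) = c • castForm h f := by
  ext v
  simp [castForm_apply]

lemma hc_add_left (β₁ β₂ η : AltForm V (n - p)) :
    hermCoeff hp b u (β₁ + β₂) η = hermCoeff hp b u β₁ η + hermCoeff hp b u β₂ η := by
  unfold hermCoeff
  rw [wedge_add_left, smul_add, wedge_add_right, castForm_add]
  simp

lemma hc_add_right (β η₁ η₂ : AltForm V (n - p)) :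
    hermCoeff hp b u β (η₁ + η₂) = hermCoeff hp b u β η₁ + hermCoeff hp b u β η₂ := by
  unfold hermCoeff
  rw [conj_add, wedge_add_right, smul_add, wedge_add_right, castForm_add]
  simp

lemma hc_smul_left (c : ℂ) (β η : AltForm V (n - p)) :
    hermCoeff hp b u (c • β) η = c * hermCoeff hp b u β η := by
  unfold hermCoeff
  rw [wedge_smul_left, smul_comm, wedge_smul_right, castForm_smul]
  simp [smul_eq_mul]

lemma hc_smul_right (c : ℂ) (β η : AltForm V (n - p)) :
    hermCoeff hp b u β (c • η) = (starRingEnd ℂ) c * hermCoeff hp b u β η := by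
  unfold hermCoeff
  rw [conj_smul, wedge_smul_right ((starRingEnd ℂ) c) β (AltForm.conj η), smul_comm,
    wedge_smul_right ((starRingEnd ℂ) c) u, castForm_smul]
  simp [smul_eq_mul]

lemma type_add {q : ℕ} (β η : AltForm V q) (hβ : IsTypeForm q 0 β)
    (hη : IsTypeForm q 0 η) : IsTypeForm q 0 (β + η) := by
  intro c v
  have h1 := hβ c v
  have h2 := hη c v
  simp only [Nat.add_zero] at *
  simp only [AlternatingMap.add_apply, h1, h2]
  ring

lemma type_smul {q : ℕ} (c : ℂ) (β : AltForm V q) (hβ : IsTypeForm q 0 β) :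
    IsTypeForm q 0 (c • β) := by
  intro d v
  have h1 := hβ d v
  simp only [Nat.add_zero] at *
  simp only [AlternatingMap.smul_apply, h1, smul_eq_mul]
  ring

end HPaux7

open HPaux HPaux2 HPaux7

/-- a real (p,p)-form is Hermitian positive iff
`(β,η) ↦ coefficient of u ∧ i^{q²} β ∧ η̄` is a positive semidefinite Hermitian
sesquilinear form on Λ^{q,0}V^∨ (Hermitian symmetry plus nonnegative diagonal). -/
theorem hermitian_positive_iff_psd_hermitian_form
    {V : Type*} [AddCommGroup V] [Module ℂ V] {n p : ℕ} (hp : p ≤ n)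
    (b : Module.Basis (Fin n) ℂ V) (u : AltForm V (p + p))
    (hreal : IsRealForm u) (htype : IsTypeForm p p u) :
    IsHermPosForm b hp u ↔
      ((∀ β η : AltForm V (n - p), IsTypeForm (n - p) 0 β → IsTypeForm (n - p) 0 η →
          (starRingEnd ℂ) (hermCoeff hp b u β η) = hermCoeff hp b u η β) ∧
        ∀ β : AltForm V (n - p), IsTypeForm (n - p) 0 β →
          IsNonnegReal (hermCoeff hp b u β β)) := by
  constructor
  · intro h
    have diag : ∀ β : AltForm V (n - p), IsTypeForm (n - p) 0 β →
        IsNonnegReal (hermCoeff hp b u β β) := by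
      intro β hβ
      obtain ⟨τ, hτ, heq⟩ := h β hβ
      have hval : hermCoeff hp b u β β = τ • ((2 : ℂ) ^ n) := by
        show (castForm _ (wedge u ((Complex.I ^ ((n - p) ^ 2)) •
            wedge β (AltForm.conj β)))) (stdArgs b) = _
        rw [heq, AlternatingMap.smul_apply, HPaux5.stdVol_stdArgs]
      have hval' : hermCoeff hp b u β β = ((τ * 2 ^ n : ℝ) : ℂ) := by
        rw [hval, Complex.real_smul]
        push_cast
        ring
      rw [hval']
      exact ⟨by rw [Complex.ofReal_re]; exact mul_nonneg hτ (by positivity),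
        by rw [Complex.ofReal_im]⟩
    refine ⟨?_, diag⟩
    intro β η hβ hη
    have e1 : hermCoeff hp b u (β + η) (β + η)
        = hermCoeff hp b u β β +
          (hermCoeff hp b u β η + hermCoeff hp b u η β) + hermCoeff hp b u η η := by
      simp only [hc_add_left, hc_add_right]
      ring
    have e2 : hermCoeff hp b u (β + Complex.I • η) (β + Complex.I • η)
        = hermCoeff hp b u β β +
          (- Complex.I * hermCoeff hp b u β η + Complex.I * hermCoeff hp b u η β)
          + hermCoeff hp b u η η := by
      simp only [hc_add_left, hc_add_right, hc_smul_left, hc_smul_right, Complex.conj_I]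
      ring_nf
      simp only [Complex.I_sq]
      ring
    obtain ⟨-, h1⟩ := diag (β + η) (type_add β η hβ hη)
    obtain ⟨-, h2⟩ := diag (β + Complex.I • η) (type_add β _ hβ (type_smul _ η hη))
    obtain ⟨-, hb0⟩ := diag β hβ
    obtain ⟨-, hh0⟩ := diag η hη
    rw [e1] at h1
    rw [e2] at h2
    simp only [Complex.add_im, Complex.mul_im, Complex.neg_re, Complex.neg_im,
      Complex.I_re, Complex.I_im, hb0, hh0] at h1 h2
    rw [Complex.ext_iff]
    constructor
    · simp only [Complex.conj_re]
      nlinarith [h1, h2]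
    · simp only [Complex.conj_im]
      nlinarith [h1, h2]
  · rintro ⟨hsym, hdiag⟩
    intro β hβ
    obtain ⟨h0re, h0im⟩ := hdiag β hβ
    refine ⟨(hermCoeff hp b u β β).re / 2 ^ n,
      div_nonneg h0re (by positivity), ?_⟩
    apply HPaux6.top_eq b
    rw [AlternatingMap.smul_apply, HPaux5.stdVol_stdArgs]
    show hermCoeff hp b u β β = _
    have : (((hermCoeff hp b u β β).re / 2 ^ n : ℝ)) • ((2 : ℂ) ^ n)
        = hermCoeff hp b u β β := by
      rw [Complex.real_smul]
      push_cast
      rw [div_mul_cancel₀ _ (pow_ne_zero n two_ne_zero)]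
      exact Complex.ext rfl (by simp [h0im])
    exact this.symm
end
end

section
/- Duality of positivity cones: the cone WP^p of positive (p,p)-forms on V is the dual cone of the cone SP^q of strongly positive (q,q)-forms (q = n − p), i.e., u ∈ Λ_ℝ^{p,p}V^∨ is positive if and only if u ∧ v is a positive volume form for every strongly positive v ∈ Λ_ℝ^{q,q}V^∨. -/
open Complex BigOperators

noncomputable section

namespace AltForm

variable {V : Type*} [AddCommGroup V] [Module ℂ V]

theorem wedge_add_right {p q : ℕ} (u : AltForm V p) (v w : AltForm V q) :
    wedge u (v + w) = wedge u v + wedge u w := by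
  have h : u.domCoprod (v + w) = u.domCoprod v + u.domCoprod w := by
    rw [← AlternatingMap.domCoprod'_apply, ← AlternatingMap.domCoprod'_apply,
      ← AlternatingMap.domCoprod'_apply, TensorProduct.tmul_add, map_add]
  unfold wedge
  rw [h, LinearMap.compAlternatingMap_add, AlternatingMap.domDomCongr_add]

theorem wedge_zero_right {p q : ℕ} (u : AltForm V p) :
    wedge u (0 : AltForm V q) = 0 := by
  have h : u.domCoprod (0 : AltForm V q) = 0 := by
    rw [← AlternatingMap.domCoprod'_apply, TensorProduct.tmul_zero, map_zero]
  unfold wedge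
  rw [h, LinearMap.compAlternatingMap_zero]
  ext x
  simp

theorem wedge_sum_right {p q : ℕ} (u : AltForm V p) {ι : Type*} (s : Finset ι)
    (v : ι → AltForm V q) :
    wedge u (∑ i ∈ s, v i) = ∑ i ∈ s, wedge u (v i) := by
  classical
  induction s using Finset.induction_on with
  | empty => simpa using wedge_zero_right u
  | insert _ _ hx ih =>
    rw [Finset.sum_insert hx, Finset.sum_insert hx, wedge_add_right, ih]

theorem castForm_add {k l : ℕ} (h : k = l) (u v : AltForm V k) :
    castForm h (u + v) = castForm h u + castForm h v :=
  AlternatingMap.domDomCongr_add _ _ _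

theorem castForm_sum {k l : ℕ} (h : k = l) {ι : Type*} (s : Finset ι)
    (v : ι → AltForm V k) :
    castForm h (∑ i ∈ s, v i) = ∑ i ∈ s, castForm h (v i) :=
  map_sum (AlternatingMap.domDomCongrEquiv (finCongr h) :
    AltForm V k ≃+ AltForm V l) v s

theorem IsPosVolume.add {n : ℕ} (b : Module.Basis (Fin n) ℂ V) {ν μ : AltForm V (n + n)}
    (hν : IsPosVolume b ν) (hμ : IsPosVolume b μ) : IsPosVolume b (ν + μ) := by
  obtain ⟨τ, hτ, rfl⟩ := hν
  obtain ⟨σ, hσ, rfl⟩ := hμ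
  exact ⟨τ + σ, by positivity, (add_smul τ σ _).symm⟩

theorem IsPosVolume.sum {n : ℕ} (b : Module.Basis (Fin n) ℂ V) {ι : Type*} (s : Finset ι)
    (ν : ι → AltForm V (n + n)) (h : ∀ i ∈ s, IsPosVolume b (ν i)) :
    IsPosVolume b (∑ i ∈ s, ν i) := by
  classical
  induction s using Finset.induction_on with
  | empty => exact ⟨0, le_refl 0, by simp⟩
  | insert _ _ hx ih =>
    rw [Finset.sum_insert hx]
    exact (h _ (Finset.mem_insert_self _ _)).add b
      (ih fun i hi => h i (Finset.mem_insert_of_mem hi))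

end AltForm

open AltForm in
/-- duality of cones. A real (p,p)-form u is positive iff `u ∧ v` is a
positive volume form for every strongly positive (q,q)-form v, q = n - p. -/
theorem positive_iff_dual_to_strongly_positive
    {V : Type*} [AddCommGroup V] [Module ℂ V] {n p : ℕ} (hp : p ≤ n)
    (b : Module.Basis (Fin n) ℂ V) (u : AltForm V (p + p))
    (hreal : IsRealForm u) (htype : IsTypeForm p p u) :
    IsPosForm b hp u ↔
      ∀ v : AltForm V ((n - p) + (n - p)), IsStronglyPos v →
        IsPosVolume b (castForm (by omega) (wedge u v)) := by
  constructor
  · intro hu v hv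
    obtain ⟨N, α, hα, rfl⟩ := hv
    rw [wedge_sum_right, castForm_sum]
    exact IsPosVolume.sum b _ _ fun s _ => hu (α s) (hα s)
  · intro h β hβ
    exact h _ ⟨1, fun _ => β, fun _ => hβ, (Fin.sum_univ_one fun _ => (Complex.I ^ ((n-p) ^ 2)) • wedge β (conj β)).symm⟩
end
end
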